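/- Let A, A' ∈ U(n) and γ: [0,1] → Mat_n(ℂ) continuous with essentially bounded derivative, satisfying A'γ(0) = γ(1)A. Then the multiplication operator M_γ on L²([0,1],ℂⁿ) satisfies: M_γ J_A − J_{A'} M_γ is Hilbert-Schmidt, where J_A = i·sign(−iD_A) and D_A is d/dt with boundary condition f(1) = −Af(0). -/

import Mathlib

open MeasureTheory Complex

/-- Lebesgue measure restricted to the unit interval. -/
noncomputable def unitMeasure : MeasureTheory.Measure ℝ :=
  MeasureTheory.volume.restrict (Set.Ioc (0 : ℝ) 1)

/-- The eigenfunction `φ_k(t) = exp(2πi(λ + k - ½)t)·v` of the boundary value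
operator `D_A = d/dt`, `f(1) = -A f(0)`. -/
noncomputable def eigenFun {n : ℕ} (lam : ℝ) (k : ℤ) (v : EuclideanSpace ℂ (Fin n)) :
    ℝ → EuclideanSpace ℂ (Fin n) :=
  fun t => Complex.exp (2 * Real.pi * Complex.I * (lam + k - 1 / 2) * t) • v

local notation "⟪" x ", " y "⟫" => @inner ℂ _ _ x y

/-- nonzero values of `x + k`, `k : ℤ`, are uniformly bounded away from 0. -/
lemma exists_delta (x : ℝ) : ∃ δ : ℝ, 0 < δ ∧ δ ≤ 1 ∧ ∀ k : ℤ, x + k ≠ 0 → δ ≤ |x + k| := by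
  by_cases h : Int.fract x = 0
  · refine ⟨1, one_pos, le_refl _, fun k hk => ?_⟩
    obtain ⟨m, hm⟩ : ∃ m : ℤ, x = (m : ℝ) := by
      refine ⟨⌊x⌋, ?_⟩
      have := Int.self_sub_floor x; rw [h] at this; linarith
    subst hm
    have heq : (m : ℝ) + k = ((m + k : ℤ) : ℝ) := by push_cast; ring
    rw [heq]
    have hne : (m + k : ℤ) ≠ 0 := by
      intro h0
      rw [h0] at heq; norm_num at heq; exact hk heq
    have h1 : (1 : ℤ) ≤ |m + k| := Int.one_le_abs hne
    exact_mod_cast h1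
  · have h0 : 0 < Int.fract x := lt_of_le_of_ne (Int.fract_nonneg x) (Ne.symm h)
    have h1 : Int.fract x < 1 := Int.fract_lt_one x
    refine ⟨min (Int.fract x) (1 - Int.fract x), lt_min h0 (by linarith),
      le_trans (min_le_left _ _) h1.le, fun k _ => ?_⟩
    have hfr : x + k = Int.fract x + (⌊x⌋ + k) := by
      have := Int.self_sub_floor x; push_cast; linarith
    rcases le_or_gt 0 (⌊x⌋ + k : ℤ) with hj | hj
    · have hle : Int.fract x ≤ x + k := by
        have : (0:ℝ) ≤ (⌊x⌋ : ℝ) + (k:ℝ) := by exact_mod_cast hj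
        rw [hfr]; linarith
      calc min (Int.fract x) (1 - Int.fract x) ≤ Int.fract x := min_le_left _ _
        _ ≤ |x + k| := le_trans hle (le_abs_self _)
    · have hj' : (⌊x⌋ + k : ℤ) ≤ -1 := by omega
      have hle : x + k ≤ Int.fract x - 1 := by
        have : ((⌊x⌋ : ℝ) + (k:ℝ)) ≤ -1 := by exact_mod_cast hj'
        rw [hfr]; linarith
      calc min (Int.fract x) (1 - Int.fract x) ≤ 1 - Int.fract x := min_le_right _ _
        _ ≤ |x + k| := by rw [abs_of_neg (by linarith : x + (k:ℝ) < 0)]; linarith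

/-- if signs differ then the difference dominates `max δ |α|`. -/
lemma sign_sep {δ α β : ℝ} (hα : α ≠ 0 → δ ≤ |α|) (hβ : β ≠ 0 → δ ≤ |β|)
    (h : Real.sign α ≠ Real.sign β) : max δ |α| ≤ |α - β| := by
  rcases lt_trichotomy α 0 with ha | ha | ha
  · rcases lt_trichotomy β 0 with hb | hb | hb
    · exact absurd (by rw [Real.sign_of_neg ha, Real.sign_of_neg hb]) h
    · subst hb
      have h1 := hα ha.ne
      simp only [sub_zero]
      exact max_le h1 le_rfl
    · have h1 := hα ha.ne; have h2 := hβ hb.ne'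
      have he : |α - β| = |α| + |β| := by
        rw [abs_of_neg ha, abs_of_pos hb, abs_of_neg (by linarith : α - β < 0)]; ring
      rw [he]
      have : (0:ℝ) ≤ |β| := abs_nonneg _
      exact max_le (by linarith) (by linarith)
  · subst ha
    have hb : β ≠ 0 := fun h0 => h (by rw [h0])
    have h2 := hβ hb
    simp only [zero_sub, abs_neg, abs_zero]
    exact max_le h2 (by positivity)
  · rcases lt_trichotomy β 0 with hb | hb | hb
    · have h1 := hα ha.ne'; have h2 := hβ hb.ne
      have he : |α - β| = |α| + |β| := by
        rw [abs_of_pos ha, abs_of_neg hb, abs_of_pos (by linarith : 0 < α - β)]; ring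
      rw [he]
      have : (0:ℝ) ≤ |β| := abs_nonneg _
      exact max_le (by linarith) (by linarith)
    · subst hb
      have h1 := hα ha.ne'
      simp only [sub_zero]
      exact max_le h1 le_rfl
    · exact absurd (by rw [Real.sign_of_pos ha, Real.sign_of_pos hb]) h

lemma summable_nat_aux : Summable (fun n : ℕ => 1 / ((n:ℝ)^2 + 1)) := by
  have h2 : Summable (fun n : ℕ => 2 * (1 / ((n:ℝ)+1)^2)) := by
    apply Summable.mul_left
    have := (Real.summable_one_div_nat_pow (p := 2)).2 (by norm_num)
    exact ((summable_nat_add_iff 1).2 this).congr (fun n => by push_cast; ring)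
  apply Summable.of_nonneg_of_le (fun n => by positivity) (fun n => ?_) h2
  have h : (1:ℝ)/((n:ℝ)^2+1) ≤ 2/((n:ℝ)+1)^2 := by
    rw [div_le_div_iff₀ (by positivity) (by positivity)]
    nlinarith [sq_nonneg ((n:ℝ) - 1)]
  calc (1:ℝ)/((n:ℝ)^2+1) ≤ 2/((n:ℝ)+1)^2 := h
    _ = 2 * (1/((n:ℝ)+1)^2) := by ring

lemma summable_int_aux : Summable (fun k : ℤ => 1 / ((k:ℝ)^2 + 1)) := by
  have h := summable_nat_aux
  refine Summable.of_nat_of_neg (h.congr fun n => by norm_num) (h.congr fun n => ?_)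
  push_cast
  ring_nf

lemma summable_inv_max_sq {δ : ℝ} (x : ℝ) (hδ : 0 < δ) :
    Summable (fun k : ℤ => 1 / (max δ |x + k|)^2) := by
  set M : ℝ := 2 + (2*x^2+1)/δ^2 with hM
  have key : ∀ k : ℤ, (k:ℝ)^2 + 1 ≤ M * (max δ |x + k|)^2 := by
    intro k
    have hmax1 : δ ≤ max δ |x + (k:ℝ)| := le_max_left _ _
    have hmax2 : |x + (k:ℝ)| ≤ max δ |x + (k:ℝ)| := le_max_right _ _
    have h1 : δ^2 ≤ (max δ |x + k|)^2 := by nlinarith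
    have h2 : (x + (k:ℝ))^2 ≤ (max δ |x + k|)^2 := by
      nlinarith [abs_nonneg (x + (k:ℝ)), _root_.sq_abs (x + (k:ℝ))]
    have h3 : (k:ℝ)^2 ≤ 2*(x+k)^2 + 2*x^2 := by nlinarith [sq_nonneg ((x+(k:ℝ)) + x)]
    have h4 : (2*x^2+1) ≤ ((2*x^2+1)/δ^2) * (max δ |x + k|)^2 := by
      rw [div_mul_eq_mul_div, le_div_iff₀ (by positivity)]
      nlinarith
    calc (k:ℝ)^2 + 1 ≤ 2*(x+k)^2 + (2*x^2 + 1) := by linarith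
      _ ≤ 2 * (max δ |x + k|)^2 + ((2*x^2+1)/δ^2) * (max δ |x + k|)^2 := by linarith
      _ = M * (max δ |x + k|)^2 := by ring
  apply Summable.of_nonneg_of_le (fun k => by positivity) (fun k => ?_)
    (summable_int_aux.mul_left M)
  have hmp : 0 < (max δ |x + (k:ℝ)|)^2 := by positivity
  have hk1 : (0:ℝ) < (k:ℝ)^2 + 1 := by positivity
  have h : (1:ℝ)/(max δ |x + (k:ℝ)|)^2 ≤ M/((k:ℝ)^2+1) := by
    rw [div_le_div_iff₀ hmp hk1]
    nlinarith [key k]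
  calc (1:ℝ)/(max δ |x + (k:ℝ)|)^2 ≤ M/((k:ℝ)^2+1) := h
    _ = M * (1/((k:ℝ)^2+1)) := by ring

variable {E : Type*} [NormedAddCommGroup E] [InnerProductSpace ℂ E] {ι : Type*}


lemma parseval_term (b : HilbertBasis ι ℂ E) (x : E) (i : ι) :
    (⟪x, (b i : E)⟫ : ℂ) * ⟪(b i : E), x⟫ = ((‖(⟪(b i : E), x⟫ : ℂ)‖^2 : ℝ) : ℂ) := by
  rw [← inner_conj_symm x (b i : E), Complex.conj_mul']
  norm_cast

lemma parseval_summable (b : HilbertBasis ι ℂ E) (x : E) :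
    Summable (fun i => ‖(⟪(b i : E), x⟫ : ℂ)‖^2) := by
  have h := b.summable_inner_mul_inner x x
  rw [funext (parseval_term b x)] at h
  exact Complex.summable_ofReal.mp h

lemma parseval_eq (b : HilbertBasis ι ℂ E) (x : E) :
    ∑' i, ‖(⟪(b i : E), x⟫ : ℂ)‖^2 = ‖x‖^2 := by
  have h := b.tsum_inner_mul_inner x x
  rw [funext (parseval_term b x), inner_self_eq_norm_sq_to_K, ← Complex.ofReal_tsum] at h
  exact Complex.ofReal_injective (by push_cast at h ⊢; exact h)

/-- inner product against a basis vector of a "diagonal" operator. -/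
lemma diag_inner (b : HilbertBasis ι ℂ E) (T : E →L[ℂ] E) (c : ι → ℂ)
    (hT : ∀ i, T (b i) = c i • (b i : E)) (q : ι) (x : E) :
    (⟪(b q : E), T x⟫ : ℂ) = c q * ⟪(b q : E), x⟫ := by
  classical
  have hx := b.hasSum_repr x
  have h1 : HasSum (fun i => (b.repr x i : ℂ) • T (b i)) (T x) := by
    simpa using hx.mapL T
  have h2 : HasSum (fun i => (⟪(b q : E), (b.repr x i : ℂ) • T (b i)⟫ : ℂ))
      ⟪(b q : E), T x⟫ := h1.mapL (innerSL ℂ (b q : E))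
  have horth := b.orthonormal
  rw [orthonormal_iff_ite] at horth
  have hterm : ∀ i, (⟪(b q : E), (b.repr x i : ℂ) • T (b i)⟫ : ℂ)
      = if i = q then c q * b.repr x q else 0 := by
    intro i
    rw [hT i, inner_smul_right, inner_smul_right, horth q i]
    by_cases h : i = q
    · subst h; rw [if_pos rfl, if_pos rfl]; ring
    · rw [if_neg (fun hq : q = i => h hq.symm), if_neg h]; ring
  rw [funext hterm] at h2
  have := h2.tsum_eq
  rw [tsum_eq_single q (fun j hj => if_neg hj), if_pos rfl] at this
  rw [← this, b.repr_apply_apply x q]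

lemma norm_exp_two_pi (c : ℝ) : ‖Complex.exp ((c:ℂ) * I)‖ = 1 := by
  rw [Complex.norm_exp_ofReal_mul_I]

lemma norm_exp_theta (θ t : ℝ) : ‖Complex.exp (2*(Real.pi:ℂ)*I*θ*t)‖ = 1 := by
  have h : (2*(Real.pi:ℂ)*I*θ*t) = ((2*Real.pi*θ*t : ℝ) : ℂ) * I := by push_cast; ring
  rw [h, norm_exp_two_pi]

lemma ftc_key {g g' : ℝ → ℂ} (hg : ∀ t, HasDerivAt g (g' t) t)
    (hmeas : AEStronglyMeasurable g' (volume.restrict (Set.Ioc (0:ℝ) 1)))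
    (C : ℝ) (hbd : ∀ t, ‖g' t‖ ≤ C) (θ : ℝ)
    (hbdry : Complex.exp (2*(Real.pi:ℂ)*I*θ) * g 1 = g 0) :
    ∫ t in Set.Ioc (0:ℝ) 1, Complex.exp (2*(Real.pi:ℂ)*I*θ*t) * g' t
      = -(2*(Real.pi:ℂ)*I*θ) * ∫ t in Set.Ioc (0:ℝ) 1, Complex.exp (2*(Real.pi:ℂ)*I*θ*t) * g t := by
  set c : ℂ := 2*(Real.pi:ℂ)*I*θ with hc
  have hgc : Continuous g := by
    rw [continuous_iff_continuousAt]; exact fun t => (hg t).continuousAt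
  have hexp : Continuous (fun t : ℝ => Complex.exp (c * t)) := by
    exact Complex.continuous_exp.comp (by continuity)
  have hF : ∀ t : ℝ, HasDerivAt (fun s : ℝ => Complex.exp (c * s) * g s)
      (Complex.exp (c * t) * c * g t + Complex.exp (c * t) * g' t) t := by
    intro t
    have he : HasDerivAt (fun u : ℂ => Complex.exp (c * u)) (Complex.exp (c * (t:ℂ)) * c) (t:ℂ) := by
      simpa using ((hasDerivAt_id (t:ℂ)).const_mul c).cexp
    exact (he.comp_ofReal).mul (hg t)
  have hA : IntervalIntegrable (fun t : ℝ => Complex.exp (c * t) * c * g t) volume 0 1 :=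
    (((hexp.mul continuous_const).mul hgc)).intervalIntegrable 0 1
  have hB : IntervalIntegrable (fun t : ℝ => Complex.exp (c * t) * g' t) volume 0 1 := by
    rw [intervalIntegrable_iff, Set.uIoc_of_le zero_le_one]
    apply Integrable.mono' (integrable_const C)
    · exact (hexp.aestronglyMeasurable).mul hmeas
    · filter_upwards with t
      rw [norm_mul]
      have h1 : ‖Complex.exp (c * t)‖ = 1 := by rw [hc]; exact norm_exp_theta θ t
      rw [h1, one_mul]; exact hbd t
  have hftc := intervalIntegral.integral_eq_sub_of_hasDerivAt (f := fun s : ℝ => Complex.exp (c * s) * g s)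
    (fun x _ => hF x) (hA.add hB)
  have hzero : Complex.exp (c * (1:ℝ)) * g 1 - Complex.exp (c * (0:ℝ)) * g 0 = 0 := by
    have h1 : (c : ℂ) * ((1:ℝ):ℂ) = c := by norm_num
    have h0 : (c : ℂ) * ((0:ℝ):ℂ) = 0 := by norm_num
    rw [h1, h0, Complex.exp_zero, one_mul, hc, hbdry, sub_self]
  rw [hzero] at hftc
  rw [intervalIntegral.integral_add hA hB, intervalIntegral.integral_of_le zero_le_one,
    intervalIntegral.integral_of_le zero_le_one] at hftc
  have := eq_neg_of_add_eq_zero_right hftc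
  rw [this]
  rw [show (fun t : ℝ => Complex.exp (c * t) * c * g t) = (fun t : ℝ => c * (Complex.exp (c * t) * g t)) from funext (fun t => by ring)]
  rw [MeasureTheory.integral_const_mul]
  ring

lemma abs_sign_le (x : ℝ) : |Real.sign x| ≤ 1 := by
  rcases lt_trichotomy x 0 with h | h | h
  · rw [Real.sign_of_neg h]; norm_num
  · subst h; rw [Real.sign_zero]; norm_num
  · rw [Real.sign_of_pos h]; norm_num

lemma conj_exp_two_pi (x : ℝ) :
    (starRingEnd ℂ) (Complex.exp (2*(Real.pi:ℂ)*I*(x:ℂ))) = Complex.exp (-(2*(Real.pi:ℂ)*I*(x:ℂ))) := by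
  have harg : (2*(Real.pi:ℂ)*I*(x:ℂ)) = ((2*Real.pi*x : ℝ):ℂ) * I := by push_cast; ring
  rw [harg, ← Complex.exp_conj, map_mul, Complex.conj_ofReal, Complex.conj_I]
  congr 1
  ring

lemma norm_two_pi_I (θ : ℝ) : ‖(2*(Real.pi:ℂ)*I*(θ:ℂ))‖ = 2*Real.pi*|θ| := by
  rw [norm_mul, norm_mul, norm_mul]
  simp [Complex.norm_real, Real.norm_eq_abs, abs_of_pos Real.pi_pos]

section EigenLemmas
variable {n : ℕ}
local notation "E" => EuclideanSpace ℂ (Fin n)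
lemma eigenFun_eq (lam : ℝ) (k : ℤ) (w : E) (t : ℝ) :
    eigenFun lam k w t = Complex.exp (2*(Real.pi:ℂ)*I*((lam + k - 1/2 : ℝ):ℂ)*t) • w := by
  rw [eigenFun]
  congr 2
  push_cast
  ring

lemma norm_exp_two_pi' (c : ℝ) : ‖Complex.exp ((c:ℂ) * I)‖ = 1 := by
  rw [Complex.norm_exp_ofReal_mul_I]

lemma norm_exp_theta' (θ t : ℝ) : ‖Complex.exp (2*(Real.pi:ℂ)*I*θ*t)‖ = 1 := by
  have h : (2*(Real.pi:ℂ)*I*θ*t) = ((2*Real.pi*θ*t : ℝ) : ℂ) * I := by push_cast; ring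
  rw [h, norm_exp_two_pi']

lemma norm_eigenFun (lam : ℝ) (k : ℤ) (w : E) (t : ℝ) (hw : ‖w‖ = 1) :
    ‖eigenFun lam k w t‖ = 1 := by
  rw [eigenFun_eq, norm_smul, norm_exp_theta', hw, one_mul]

lemma inner_eigen (T : E →L[ℂ] E) (a c : ℝ) (w w' : E) (t : ℝ) :
    ⟪Complex.exp (2*(Real.pi:ℂ)*I*(c:ℂ)*t) • w', T (Complex.exp (2*(Real.pi:ℂ)*I*(a:ℂ)*t) • w)⟫
      = Complex.exp (2*(Real.pi:ℂ)*I*((a - c : ℝ):ℂ)*t) * ⟪w', T w⟫ := by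
  rw [_root_.map_smul, inner_smul_left, inner_smul_right, ← mul_assoc]
  congr 1
  have harg : (2*(Real.pi:ℂ)*I*(c:ℂ)*(t:ℂ)) = ((2*Real.pi*c*t : ℝ):ℂ) * I := by
    push_cast; ring
  have hconj : (starRingEnd ℂ) (Complex.exp (2*(Real.pi:ℂ)*I*(c:ℂ)*t))
      = Complex.exp (-(2*(Real.pi:ℂ)*I*(c:ℂ)*t)) := by
    rw [harg, ← Complex.exp_conj, map_mul, Complex.conj_ofReal, Complex.conj_I]
    congr 1
    ring
  rw [hconj, ← Complex.exp_add]
  congr 1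
  push_cast
  ring

lemma exp_int_shift (x : ℝ) (j : ℤ) :
    Complex.exp (2*(Real.pi:ℂ)*I*((x + j : ℝ):ℂ)) = Complex.exp (2*(Real.pi:ℂ)*I*(x:ℂ)) := by
  have h : (2*(Real.pi:ℂ)*I*((x + j : ℝ):ℂ)) = 2*(Real.pi:ℂ)*I*(x:ℂ) + (j:ℂ) * (2*(Real.pi:ℂ)*I) := by
    push_cast; ring
  rw [h, Complex.exp_add, Complex.exp_int_mul_two_pi_mul_I, mul_one]

end EigenLemmas

set_option maxHeartbeats 1000000 in
/-- if `γ : [0,1] → Mat_n(ℂ)` is continuous with (essentially) bounded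
derivative and satisfies `A'γ(0) = γ(1)A`, then the multiplication operator `M_γ`
satisfies that `M_γ J_A − J_{A'} M_γ` is Hilbert-Schmidt.  The operators `J_A, J_{A'}`
and `M_γ` are encoded by their action on Hilbert bases of eigenfunctions of
`D_A, D_{A'}`, and the Hilbert-Schmidt property through square-summability over a
Hilbert basis. -/
theorem multiplication_almost_intertwines_JA (n : ℕ)
    (A A' : EuclideanSpace ℂ (Fin n) ≃ₗᵢ[ℂ] EuclideanSpace ℂ (Fin n))
    (v v' : OrthonormalBasis (Fin n) ℂ (EuclideanSpace ℂ (Fin n)))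
    (lam lam' : Fin n → ℝ)
    (hA : ∀ r, A (v r) = Complex.exp (2 * Real.pi * Complex.I * lam r) • v r)
    (hA' : ∀ r, A' (v' r) = Complex.exp (2 * Real.pi * Complex.I * lam' r) • v' r)
    (γ : ℝ → (EuclideanSpace ℂ (Fin n) →L[ℂ] EuclideanSpace ℂ (Fin n)))
    (hγcont : Continuous γ)
    (γd : ℝ → (EuclideanSpace ℂ (Fin n) →L[ℂ] EuclideanSpace ℂ (Fin n)))
    (hγderiv : ∀ t, HasDerivAt γ (γd t) t)
    (hγdbd : ∃ C, ∀ t, ‖γd t‖ ≤ C)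
    (hbc : ∀ x, A' (γ 0 x) = γ 1 (A x))
    (hmem : ∀ (k : ℤ) (r : Fin n), MeasureTheory.MemLp (eigenFun (lam r) k (v r)) 2 unitMeasure)
    (hmem' : ∀ (k : ℤ) (r : Fin n),
      MeasureTheory.MemLp (eigenFun (lam' r) k (v' r)) 2 unitMeasure)
    (hmemγ : ∀ (k : ℤ) (r : Fin n),
      MeasureTheory.MemLp (fun t => γ t (eigenFun (lam r) k (v r) t)) 2 unitMeasure)
    (b b' : HilbertBasis (ℤ × Fin n) ℂ
      (MeasureTheory.Lp (EuclideanSpace ℂ (Fin n)) 2 unitMeasure))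
    (hb : ∀ p : ℤ × Fin n, b p = (hmem p.1 p.2).toLp (eigenFun (lam p.2) p.1 (v p.2)))
    (hb' : ∀ p : ℤ × Fin n, b' p = (hmem' p.1 p.2).toLp (eigenFun (lam' p.2) p.1 (v' p.2)))
    (J J' Mγ : MeasureTheory.Lp (EuclideanSpace ℂ (Fin n)) 2 unitMeasure →L[ℂ]
      MeasureTheory.Lp (EuclideanSpace ℂ (Fin n)) 2 unitMeasure)
    (hJ : ∀ p : ℤ × Fin n,
      J (b p) = (Complex.I * (Real.sign (lam p.2 + p.1 - 1 / 2) : ℂ)) • (b p))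
    (hJ' : ∀ p : ℤ × Fin n,
      J' (b' p) = (Complex.I * (Real.sign (lam' p.2 + p.1 - 1 / 2) : ℂ)) • (b' p))
    (hMγ : ∀ p : ℤ × Fin n,
      Mγ (b p) = (hmemγ p.1 p.2).toLp (fun t => γ t (eigenFun (lam p.2) p.1 (v p.2) t))) :
    Summable fun p : ℤ × Fin n => ‖(Mγ.comp J - J'.comp Mγ) (b p)‖ ^ 2 := by
  classical
  borelize (EuclideanSpace ℂ (Fin n))
  rcases eq_or_ne n 0 with hn | hn
  · subst hn
    haveI : IsEmpty (ℤ × Fin 0) := ⟨fun p => Fin.elim0 p.2⟩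
    exact summable_empty
  haveI : Nonempty (Fin n) := ⟨⟨0, Nat.pos_of_ne_zero hn⟩⟩
  obtain ⟨C₀, hC₀⟩ := hγdbd
  set C : ℝ := max C₀ 0 with hCdef
  have hC : ∀ t, ‖γd t‖ ≤ C := fun t => (hC₀ t).trans (le_max_left _ _)
  have hC0 : (0:ℝ) ≤ C := le_max_right _ _
  haveI hfin : IsFiniteMeasure unitMeasure := by
    constructor
    rw [unitMeasure, Measure.restrict_apply_univ, Real.volume_Ioc]
    norm_num
  have hμuniv : unitMeasure Set.univ = 1 := by
    rw [unitMeasure, Measure.restrict_apply_univ, Real.volume_Ioc]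
    norm_num
  -- the uniform gap δ0
  choose δ1 hδ1pos hδ1le hδ1 using fun r : Fin n => exists_delta (lam r - 1/2)
  choose δ2 hδ2pos hδ2le hδ2 using fun r : Fin n => exists_delta (lam' r - 1/2)
  set δ0 : ℝ := Finset.univ.inf' Finset.univ_nonempty (fun r : Fin n => min (δ1 r) (δ2 r)) with hδ0def
  have hδ0pos : 0 < δ0 := by
    rw [hδ0def, Finset.lt_inf'_iff]
    exact fun r _ => lt_min (hδ1pos r) (hδ2pos r)
  have hδ0α : ∀ p : ℤ × Fin n, lam p.2 + (p.1:ℝ) - 1/2 ≠ 0 → δ0 ≤ |lam p.2 + (p.1:ℝ) - 1/2| := by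
    intro p hp
    have h1 : δ0 ≤ δ1 p.2 :=
      le_trans (Finset.inf'_le _ (Finset.mem_univ p.2)) (min_le_left _ _)
    have heq : lam p.2 + (p.1:ℝ) - 1/2 = (lam p.2 - 1/2) + (p.1:ℝ) := by ring
    rw [heq] at hp ⊢
    exact le_trans h1 (hδ1 p.2 p.1 hp)
  have hδ0β : ∀ q : ℤ × Fin n, lam' q.2 + (q.1:ℝ) - 1/2 ≠ 0 → δ0 ≤ |lam' q.2 + (q.1:ℝ) - 1/2| := by
    intro q hq
    have h1 : δ0 ≤ δ2 q.2 :=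
      le_trans (Finset.inf'_le _ (Finset.mem_univ q.2)) (min_le_right _ _)
    have heq : lam' q.2 + (q.1:ℝ) - 1/2 = (lam' q.2 - 1/2) + (q.1:ℝ) := by ring
    rw [heq] at hq ⊢
    exact le_trans h1 (hδ2 q.2 q.1 hq)
  -- derivative of t ↦ γ t w
  have hder : ∀ (w : EuclideanSpace ℂ (Fin n)) (t : ℝ),
      HasDerivAt (fun s => γ s w) (γd t w) t := by
    intro w t
    have h := ((ContinuousLinearMap.apply ℂ (EuclideanSpace ℂ (Fin n)) w).restrictScalars
      ℝ).hasFDerivAt.comp_hasDerivAt t (hγderiv t)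
    exact h
  have hvd_meas : ∀ w : EuclideanSpace ℂ (Fin n), Measurable (fun t => γd t w) := by
    intro w
    have h : (fun t => γd t w) = deriv (fun s => γ s w) :=
      funext fun t => ((hder w t).deriv).symm
    rw [h]
    exact measurable_deriv _
  -- pointwise bound on γd applied to eigenfunctions
  have hvnorm : ∀ r : Fin n, ‖v r‖ = 1 := fun r => v.orthonormal.1 r
  have hφbd : ∀ (p : ℤ × Fin n) (t : ℝ),
      ‖γd t (eigenFun (lam p.2) p.1 (v p.2) t)‖ ≤ C := by
    intro p t
    calc ‖γd t (eigenFun (lam p.2) p.1 (v p.2) t)‖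
        ≤ ‖γd t‖ * ‖eigenFun (lam p.2) p.1 (v p.2) t‖ := (γd t).le_opNorm _
      _ = ‖γd t‖ := by rw [norm_eigenFun _ _ _ _ (hvnorm p.2), mul_one]
      _ ≤ C := hC t
  -- Memℒp of γd · φ_p
  have hmemd : ∀ p : ℤ × Fin n,
      MemLp (fun t => γd t (eigenFun (lam p.2) p.1 (v p.2) t)) 2 unitMeasure := by
    intro p
    apply MemLp.of_bound ?_ C (ae_of_all _ (hφbd p))
    have h : (fun t => γd t (eigenFun (lam p.2) p.1 (v p.2) t))
        = fun t : ℝ => Complex.exp (2*(Real.pi:ℂ)*I*((lam p.2 + p.1 - 1/2 : ℝ):ℂ)*t) • (γd t (v p.2)) := by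
      funext t
      rw [eigenFun_eq, _root_.map_smul]
    rw [h]
    have hcexp : Continuous (fun t : ℝ => Complex.exp (2*(Real.pi:ℂ)*I*((lam p.2 + p.1 - 1/2 : ℝ):ℂ)*t)) :=
      Complex.continuous_exp.comp (continuous_const.mul Complex.continuous_ofReal)
    exact (hcexp.aestronglyMeasurable).smul ((hvd_meas (v p.2)).aestronglyMeasurable)
  -- inner products as integrals
  have hint : ∀ (q p : ℤ × Fin n) (T : ℝ → (EuclideanSpace ℂ (Fin n) →L[ℂ] EuclideanSpace ℂ (Fin n)))
      (hT : MemLp (fun t => T t (eigenFun (lam p.2) p.1 (v p.2) t)) 2 unitMeasure),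
      (inner ℂ (b' q : MeasureTheory.Lp (EuclideanSpace ℂ (Fin n)) 2 unitMeasure) (hT.toLp _) : ℂ)
        = ∫ t in Set.Ioc (0:ℝ) 1,
            Complex.exp (2*(Real.pi:ℂ)*I*(((lam p.2 + p.1 - 1/2) - (lam' q.2 + q.1 - 1/2) : ℝ):ℂ)*t)
              * inner ℂ (v' q.2) (T t (v p.2)) := by
    intro q p T hT
    rw [hb' q, MeasureTheory.L2.inner_def]
    apply integral_congr_ae
    filter_upwards [(hmem' q.1 q.2).coeFn_toLp, hT.coeFn_toLp] with t h1 h2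
    rw [h1, h2, eigenFun_eq, eigenFun_eq, inner_eigen]
  have hc_eq : ∀ p q : ℤ × Fin n,
      (inner ℂ (b' q : MeasureTheory.Lp (EuclideanSpace ℂ (Fin n)) 2 unitMeasure) (Mγ (b p)) : ℂ)
        = ∫ t in Set.Ioc (0:ℝ) 1,
            Complex.exp (2*(Real.pi:ℂ)*I*(((lam p.2 + p.1 - 1/2) - (lam' q.2 + q.1 - 1/2) : ℝ):ℂ)*t)
              * inner ℂ (v' q.2) (γ t (v p.2)) := by
    intro p q
    rw [hMγ p]
    exact hint q p γ (hmemγ p.1 p.2)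
  have hd_eq : ∀ p q : ℤ × Fin n,
      (inner ℂ (b' q : MeasureTheory.Lp (EuclideanSpace ℂ (Fin n)) 2 unitMeasure) ((hmemd p).toLp _) : ℂ)
        = ∫ t in Set.Ioc (0:ℝ) 1,
            Complex.exp (2*(Real.pi:ℂ)*I*(((lam p.2 + p.1 - 1/2) - (lam' q.2 + q.1 - 1/2) : ℝ):ℂ)*t)
              * inner ℂ (v' q.2) (γd t (v p.2)) := fun p q => hint q p γd (hmemd p)
  -- boundary condition
  have hbdry : ∀ (p q : ℤ × Fin n),
      Complex.exp (2*(Real.pi:ℂ)*I*(((lam p.2 + p.1 - 1/2) - (lam' q.2 + q.1 - 1/2) : ℝ):ℂ))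
        * (inner ℂ (v' q.2) (γ 1 (v p.2)) : ℂ) = inner ℂ (v' q.2) (γ 0 (v p.2)) := by
    intro p q
    have hsplit : ((lam p.2 + (p.1:ℝ) - 1/2) - (lam' q.2 + (q.1:ℝ) - 1/2))
        = (lam p.2 - lam' q.2) + ((p.1 - q.1 : ℤ) : ℝ) := by push_cast; ring
    rw [hsplit, exp_int_shift]
    have hsymm : A'.symm (v' q.2) = Complex.exp (-(2*(Real.pi:ℂ)*I*(lam' q.2:ℂ))) • v' q.2 := by
      have h := congrArg A'.symm (hA' q.2)
      rw [A'.symm_apply_apply, _root_.map_smul] at h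
      have h2 := congrArg (fun y => Complex.exp (-(2*(Real.pi:ℂ)*I*(lam' q.2:ℂ))) • y) h
      simp only [smul_smul, ← Complex.exp_add] at h2
      rw [show -(2*(Real.pi:ℂ)*I*(lam' q.2:ℂ)) + (2 * (Real.pi:ℂ) * Complex.I * (lam' q.2:ℂ)) = 0
        by ring, Complex.exp_zero, one_smul] at h2
      exact h2.symm
    have key : (inner ℂ (v' q.2) (A' (γ 0 (v p.2))) : ℂ)
        = Complex.exp (2*(Real.pi:ℂ)*I*(lam' q.2:ℂ)) * inner ℂ (v' q.2) (γ 0 (v p.2)) := by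
      conv_lhs => rw [← A'.apply_symm_apply (v' q.2)]
      rw [A'.inner_map_map, hsymm, inner_smul_left]
      congr 1
      rw [show -(2*(Real.pi:ℂ)*I*((lam' q.2 : ℝ):ℂ)) = 2*(Real.pi:ℂ)*I*(((-lam' q.2 : ℝ)):ℂ) by
        push_cast; ring, conj_exp_two_pi]
      congr 1
      push_cast
      ring
    have key2 : (inner ℂ (v' q.2) (γ 1 (A (v p.2))) : ℂ)
        = Complex.exp (2*(Real.pi:ℂ)*I*(lam p.2:ℂ)) * inner ℂ (v' q.2) (γ 1 (v p.2)) := by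
      rw [hA p.2, _root_.map_smul, inner_smul_right]
    have h3 : (inner ℂ (v' q.2) (A' (γ 0 (v p.2))) : ℂ) = inner ℂ (v' q.2) (γ 1 (A (v p.2))) := by
      rw [hbc (v p.2)]
    rw [key, key2] at h3
    have hE : Complex.exp (2*(Real.pi:ℂ)*I*((lam p.2 - lam' q.2 : ℝ):ℂ))
        * Complex.exp (2*(Real.pi:ℂ)*I*(lam' q.2:ℂ)) = Complex.exp (2*(Real.pi:ℂ)*I*(lam p.2:ℂ)) := by
      rw [← Complex.exp_add]
      congr 1
      push_cast
      ring
    have hne : Complex.exp (2*(Real.pi:ℂ)*I*(lam' q.2:ℂ)) ≠ 0 := Complex.exp_ne_zero _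
    apply mul_left_cancel₀ hne
    calc Complex.exp (2*(Real.pi:ℂ)*I*(lam' q.2:ℂ))
          * (Complex.exp (2*(Real.pi:ℂ)*I*((lam p.2 - lam' q.2 : ℝ):ℂ)) * inner ℂ (v' q.2) (γ 1 (v p.2)))
        = (Complex.exp (2*(Real.pi:ℂ)*I*((lam p.2 - lam' q.2 : ℝ):ℂ))
            * Complex.exp (2*(Real.pi:ℂ)*I*(lam' q.2:ℂ))) * inner ℂ (v' q.2) (γ 1 (v p.2)) := by ring
      _ = Complex.exp (2*(Real.pi:ℂ)*I*(lam p.2:ℂ)) * inner ℂ (v' q.2) (γ 1 (v p.2)) := by rw [hE]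
      _ = Complex.exp (2*(Real.pi:ℂ)*I*(lam' q.2:ℂ)) * inner ℂ (v' q.2) (γ 0 (v p.2)) := h3.symm
  -- integration by parts relation
  have hrel : ∀ p q : ℤ × Fin n,
      (inner ℂ (b' q : MeasureTheory.Lp (EuclideanSpace ℂ (Fin n)) 2 unitMeasure) ((hmemd p).toLp _) : ℂ)
        = -(2*(Real.pi:ℂ)*I*(((lam p.2 + p.1 - 1/2) - (lam' q.2 + q.1 - 1/2) : ℝ):ℂ))
          * inner ℂ (b' q : MeasureTheory.Lp (EuclideanSpace ℂ (Fin n)) 2 unitMeasure) (Mγ (b p)) := by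
    intro p q
    rw [hd_eq p q, hc_eq p q]
    refine ftc_key (g := fun t => inner ℂ (v' q.2) (γ t (v p.2)))
      (g' := fun t => inner ℂ (v' q.2) (γd t (v p.2))) ?_ ?_ C ?_ _ (hbdry p q)
    · intro t
      have h := ((innerSL ℂ (v' q.2)).restrictScalars ℝ).hasFDerivAt.comp_hasDerivAt t
        (hder (v p.2) t)
      exact h
    · exact ((measurable_const.inner (hvd_meas (v p.2))).aestronglyMeasurable)
    · intro t
      calc ‖(inner ℂ (v' q.2) (γd t (v p.2)) : ℂ)‖
          ≤ ‖v' q.2‖ * ‖γd t (v p.2)‖ := norm_inner_le_norm _ _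
        _ = ‖γd t (v p.2)‖ := by rw [v'.orthonormal.1 q.2, one_mul]
        _ ≤ ‖γd t‖ * ‖v p.2‖ := (γd t).le_opNorm _
        _ = ‖γd t‖ := by rw [hvnorm p.2, mul_one]
        _ ≤ C := hC t
  -- coefficient identity
  have hcoef : ∀ p q : ℤ × Fin n,
      (inner ℂ (b' q : MeasureTheory.Lp (EuclideanSpace ℂ (Fin n)) 2 unitMeasure)
          ((Mγ.comp J - J'.comp Mγ) (b p)) : ℂ)
        = (I*((Real.sign (lam p.2 + p.1 - 1/2) : ℝ):ℂ) - I*((Real.sign (lam' q.2 + q.1 - 1/2) : ℝ):ℂ))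
          * inner ℂ (b' q : MeasureTheory.Lp (EuclideanSpace ℂ (Fin n)) 2 unitMeasure) (Mγ (b p)) := by
    intro p q
    rw [ContinuousLinearMap.sub_apply, ContinuousLinearMap.comp_apply,
      ContinuousLinearMap.comp_apply, inner_sub_right, hJ p, _root_.map_smul, inner_smul_right,
      diag_inner b' J' (fun q : ℤ × Fin n => I*((Real.sign (lam' q.2 + q.1 - 1/2) : ℝ):ℂ)) hJ' q
        (Mγ (b p))]
    ring
  -- norm bound for the Lp element of γd·φ
  have hdnorm : ∀ p : ℤ × Fin n,
      ‖((hmemd p).toLp _ : MeasureTheory.Lp (EuclideanSpace ℂ (Fin n)) 2 unitMeasure)‖ ≤ C := by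
    intro p
    rw [MeasureTheory.Lp.norm_toLp]
    have h := MeasureTheory.eLpNorm_le_of_ae_bound (μ := unitMeasure) (p := 2)
      (ae_of_all _ (hφbd p))
    rw [hμuniv, ENNReal.one_rpow, one_mul] at h
    exact ENNReal.toReal_le_of_le_ofReal hC0 h
  -- per-term bound
  have hterm : ∀ p q : ℤ × Fin n,
      ‖(inner ℂ (b' q : MeasureTheory.Lp (EuclideanSpace ℂ (Fin n)) 2 unitMeasure)
          ((Mγ.comp J - J'.comp Mγ) (b p)) : ℂ)‖^2
        ≤ (1/(Real.pi^2 * (max δ0 |lam p.2 + (p.1:ℝ) - 1/2|)^2))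
          * ‖(inner ℂ (b' q : MeasureTheory.Lp (EuclideanSpace ℂ (Fin n)) 2 unitMeasure)
              ((hmemd p).toLp _) : ℂ)‖^2 := by
    intro p q
    have hf : 0 < max δ0 |lam p.2 + (p.1:ℝ) - 1/2| := lt_of_lt_of_le hδ0pos (le_max_left _ _)
    by_cases hs : Real.sign (lam p.2 + (p.1:ℝ) - 1/2) = Real.sign (lam' q.2 + (q.1:ℝ) - 1/2)
    · rw [hcoef p q, hs]
      simp only [sub_self, zero_mul, norm_zero]
      rw [zero_pow (by norm_num : (2:ℕ) ≠ 0)]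
      positivity
    · have hsep : max δ0 |lam p.2 + (p.1:ℝ) - 1/2|
          ≤ |(lam p.2 + (p.1:ℝ) - 1/2) - (lam' q.2 + (q.1:ℝ) - 1/2)| :=
        sign_sep (hδ0α p) (hδ0β q) hs
      have hD : ‖(inner ℂ (b' q : MeasureTheory.Lp (EuclideanSpace ℂ (Fin n)) 2 unitMeasure)
            ((hmemd p).toLp _) : ℂ)‖
          = 2*Real.pi*|(lam p.2 + (p.1:ℝ) - 1/2) - (lam' q.2 + (q.1:ℝ) - 1/2)|
            * ‖(inner ℂ (b' q : MeasureTheory.Lp (EuclideanSpace ℂ (Fin n)) 2 unitMeasure)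
                  (Mγ (b p)) : ℂ)‖ := by
        rw [hrel p q, norm_mul, norm_neg, norm_two_pi_I]
      have hcoefbd : ‖(inner ℂ (b' q : MeasureTheory.Lp (EuclideanSpace ℂ (Fin n)) 2 unitMeasure)
            ((Mγ.comp J - J'.comp Mγ) (b p)) : ℂ)‖
          ≤ 2 * ‖(inner ℂ (b' q : MeasureTheory.Lp (EuclideanSpace ℂ (Fin n)) 2 unitMeasure)
                (Mγ (b p)) : ℂ)‖ := by
        rw [hcoef p q, norm_mul]
        apply mul_le_mul_of_nonneg_right ?_ (norm_nonneg _)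
        have heq : I*((Real.sign (lam p.2 + (p.1:ℝ) - 1/2) : ℝ):ℂ)
              - I*((Real.sign (lam' q.2 + (q.1:ℝ) - 1/2) : ℝ):ℂ)
            = I * (((Real.sign (lam p.2 + (p.1:ℝ) - 1/2)
              - Real.sign (lam' q.2 + (q.1:ℝ) - 1/2) : ℝ)):ℂ) := by push_cast; ring
        rw [heq, norm_mul, Complex.norm_I, one_mul, Complex.norm_real, Real.norm_eq_abs]
        calc |Real.sign (lam p.2 + (p.1:ℝ) - 1/2) - Real.sign (lam' q.2 + (q.1:ℝ) - 1/2)|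
            ≤ |Real.sign (lam p.2 + (p.1:ℝ) - 1/2)| + |Real.sign (lam' q.2 + (q.1:ℝ) - 1/2)| :=
              abs_sub _ _
          _ ≤ 1 + 1 := add_le_add (abs_sign_le _) (abs_sign_le _)
          _ = 2 := by norm_num
      have h1 : ‖(inner ℂ (b' q : MeasureTheory.Lp (EuclideanSpace ℂ (Fin n)) 2 unitMeasure)
            ((Mγ.comp J - J'.comp Mγ) (b p)) : ℂ)‖^2
          ≤ (2 * ‖(inner ℂ (b' q : MeasureTheory.Lp (EuclideanSpace ℂ (Fin n)) 2 unitMeasure)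
              (Mγ (b p)) : ℂ)‖)^2 := pow_le_pow_left₀ (norm_nonneg _) hcoefbd 2
      rw [hD]
      refine le_trans h1 ?_
      set N := ‖(inner ℂ (b' q : MeasureTheory.Lp (EuclideanSpace ℂ (Fin n)) 2 unitMeasure)
        (Mγ (b p)) : ℂ)‖ with hN
      set f := max δ0 |lam p.2 + (p.1:ℝ) - 1/2| with hfd
      set θa := |(lam p.2 + (p.1:ℝ) - 1/2) - (lam' q.2 + (q.1:ℝ) - 1/2)| with hθa
      have hf2 : f^2 ≤ θa^2 := by nlinarith [abs_nonneg ((lam p.2 + (p.1:ℝ) - 1/2) - (lam' q.2 + (q.1:ℝ) - 1/2))]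
      rw [one_div, inv_mul_eq_div, le_div_iff₀ (by positivity)]
      calc (2*N)^2 * (Real.pi^2*f^2) = (4*Real.pi^2*N^2) * f^2 := by ring
        _ ≤ (4*Real.pi^2*N^2) * θa^2 := by
            apply mul_le_mul_of_nonneg_left hf2
            positivity
        _ = (2*Real.pi*θa*N)^2 := by ring
  -- sum over q
  have hsum_le : ∀ p : ℤ × Fin n, ‖(Mγ.comp J - J'.comp Mγ) (b p)‖^2
      ≤ (C^2/Real.pi^2) * (1/(max δ0 |lam p.2 + (p.1:ℝ) - 1/2|)^2) := by
    intro p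
    have hf : 0 < max δ0 |lam p.2 + (p.1:ℝ) - 1/2| := lt_of_lt_of_le hδ0pos (le_max_left _ _)
    have hs1 := parseval_summable b' ((Mγ.comp J - J'.comp Mγ) (b p))
    have hs2 := (parseval_summable b' ((hmemd p).toLp _)).mul_left
      (1/(Real.pi^2 * (max δ0 |lam p.2 + (p.1:ℝ) - 1/2|)^2))
    have h1 := Summable.tsum_le_tsum (hterm p) hs1 hs2
    rw [tsum_mul_left, parseval_eq b', parseval_eq b'] at h1
    refine le_trans h1 ?_
    have h2 : ‖((hmemd p).toLp _ : MeasureTheory.Lp (EuclideanSpace ℂ (Fin n)) 2 unitMeasure)‖^2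
        ≤ C^2 := pow_le_pow_left₀ (norm_nonneg _) (hdnorm p) 2
    calc 1/(Real.pi^2 * (max δ0 |lam p.2 + (p.1:ℝ) - 1/2|)^2)
          * ‖((hmemd p).toLp _ : MeasureTheory.Lp (EuclideanSpace ℂ (Fin n)) 2 unitMeasure)‖^2
        ≤ 1/(Real.pi^2 * (max δ0 |lam p.2 + (p.1:ℝ) - 1/2|)^2) * C^2 := by
          apply mul_le_mul_of_nonneg_left h2
          positivity
      _ = (C^2/Real.pi^2) * (1/(max δ0 |lam p.2 + (p.1:ℝ) - 1/2|)^2) := by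
          field_simp
  -- final summability
  apply Summable.of_nonneg_of_le (fun p => by positivity) hsum_le
  apply Summable.mul_left
  refine (summable_prod_of_nonneg (fun p => by positivity)).2 ⟨fun k => ?_, ?_⟩
  · exact (hasSum_fintype _).summable
  · refine Summable.congr (f := fun k : ℤ =>
      ∑ r : Fin n, 1/(max δ0 |lam r + (k:ℝ) - 1/2|)^2) ?_ (fun k => (tsum_fintype _).symm)
    apply summable_sum
    intro r _
    refine (summable_inv_max_sq (lam r - 1/2) hδ0pos).congr (fun k => ?_)
    rw [show (lam r - 1/2) + (k:ℝ) = lam r + (k:ℝ) - 1/2 by ring]
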